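/- Let 𝓛 be a finite-dimensional ℂ-vector space, F a homogeneous polynomial on 𝓛, and g ∈ SL(𝓛) a linear automorphism such that F is invariant under the action of g. If X ⊆ ℙ(𝓛) is a projective variety with MLD_F(X) = 1, then MLD_F(g·X) = 1, and the associated solutions of the homaloidal PDE satisfy Φ_{g·X,𝓛,F} = Φ_{X,𝓛,F} ∘ gᵀ, where gᵀ : 𝓛* → 𝓛* is the transpose map u ↦ u ∘ g. -/
import Mathlib


open MvPolynomial

noncomputable section

/-- Points of the affine space `ℂ^ι`. -/
abbrev Pt (ι : Type) := ι → ℂ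

variable {ι κ : Type} [Fintype ι] [DecidableEq ι] [Fintype κ] [DecidableEq κ]

/-- The standard bilinear pairing identifying `ℂ^ι` with its dual. -/
def dotP (u v : Pt ι) : ℂ := ∑ i, u i * v i

/-- The gradient of a polynomial at a point. -/
def gradP (F : MvPolynomial ι ℂ) (p : Pt ι) : Pt ι := fun i => eval p (pderiv i F)

/-- The linear functional `v ↦ dotP u v`. -/
def dotL (u : Pt ι) : (Pt ι) →ₗ[ℂ] ℂ :=
  ∑ i, u i • (LinearMap.proj i : (ι → ℂ) →ₗ[ℂ] ℂ)

/-- The vanishing ideal of a subset of `ℂ^ι`. -/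
def vanIdeal (X : Set (Pt ι)) : Set (MvPolynomial ι ℂ) :=
  {f | ∀ x ∈ X, eval x f = 0}

/-- The common zero locus of a set of polynomials. -/
def zeroSet (I : Set (MvPolynomial ι ℂ)) : Set (Pt ι) := {x | ∀ f ∈ I, eval x f = 0}

/-- The Zariski closure of a subset of `ℂ^ι`. -/
def zarClosure (X : Set (Pt ι)) : Set (Pt ι) := zeroSet (vanIdeal X)

/-- An (embedded) affine variety: a Zariski closed subset of `ℂ^ι`. -/
def IsAffineVariety (X : Set (Pt ι)) : Prop := X = zarClosure X

/-- The Zariski tangent space of `X` at `p`. -/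
def tangentSpace (X : Set (Pt ι)) (p : Pt ι) : Submodule ℂ (Pt ι) :=
  ⨅ f ∈ vanIdeal X, LinearMap.ker (dotL (gradP f p))

/-- The smooth locus of an (irreducible) variety: the points where the Zariski
tangent space has minimal dimension. -/
def smoothLocus (X : Set (Pt ι)) : Set (Pt ι) :=
  {p | p ∈ X ∧ ∀ q ∈ X, Module.finrank ℂ (tangentSpace X p) ≤ Module.finrank ℂ (tangentSpace X q)}

/-- `p` is a critical point of the Gaussian log-likelihood
`ℓ_{F,u} = log F - u` along `X`: it lies in the smooth locus, off `V(F)`, and the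
differential of `ℓ_{F,u}` annihilates the tangent space of `X` at `p`. -/
def IsCriticalPoint (X : Set (Pt ι)) (F : MvPolynomial ι ℂ) (u : Pt ι) (p : Pt ι) : Prop :=
  p ∈ smoothLocus X ∧ eval p F ≠ 0 ∧
    ∀ v ∈ tangentSpace X p, dotP (gradP F p) v = eval p F * dotP u v

/-- A property holds generically (for general `u`) if it holds on the complement
of some hypersurface. -/
def Generically (P : Pt ι → Prop) : Prop :=
  ∃ h : MvPolynomial ι ℂ, h ≠ 0 ∧ ∀ u : Pt ι, eval u h ≠ 0 → P u

/-- The (Gaussian) maximum likelihood degree of `X` with respect to `F` is `d`: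
for general `u` the log-likelihood `ℓ_{F,u}` has exactly `d` critical points
on `X^sm ∖ V(F)`. -/
def MLDegreeIs (X : Set (Pt ι)) (F : MvPolynomial ι ℂ) (d : ℕ) : Prop :=
  Generically (fun u : Pt ι => {p | IsCriticalPoint X F u p}.ncard = d)

/-- A cone in `ℂ^ι` (the affine cone of a projective variety is such). -/
def IsCone (X : Set (Pt ι)) : Prop := ∀ t : ℂ, ∀ x ∈ X, t • x ∈ X

/-- An irreducible affine variety: nonempty, closed, with prime vanishing ideal. -/
def IsIrreducibleVariety (X : Set (Pt ι)) : Prop :=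
  IsAffineVariety X ∧ X.Nonempty ∧
    ∀ f g : MvPolynomial ι ℂ, (∀ x ∈ X, eval x f * eval x g = 0) →
      (∀ x ∈ X, eval x f = 0) ∨ ∀ x ∈ X, eval x g = 0

/-- A rational map `ℂ^ι ⇢ ℂ^κ`, given by numerator polynomials over a common
nonzero denominator. -/
structure RatMap (ι κ : Type) [Fintype ι] where
  num : κ → MvPolynomial ι ℂ
  den : MvPolynomial ι ℂ
  den_ne : den ≠ 0

/-- The locus where the rational map is defined. -/
def RatMap.isDefinedAt (Ψ : RatMap ι κ) (u : Pt ι) : Prop := eval u Ψ.den ≠ 0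

/-- Evaluation of a rational map. -/
def RatMap.eval (Ψ : RatMap ι κ) (u : Pt ι) : Pt κ :=
  fun i => MvPolynomial.eval u (Ψ.num i) / MvPolynomial.eval u Ψ.den

/-- The rational map `Ψ` maps into `C` with Zariski-dense image; i.e. it is a
dominant rational map onto `C`. -/
def RatMap.DominatesOnto (Ψ : RatMap ι κ) (C : Set (Pt κ)) : Prop :=
  (∀ u, Ψ.isDefinedAt u → Ψ.eval u ∈ C) ∧
    ∀ g : MvPolynomial κ ℂ, (∀ u, Ψ.isDefinedAt u → MvPolynomial.eval (Ψ.eval u) g = 0) →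
      ∀ x ∈ C, MvPolynomial.eval x g = 0

/-- `Ψ` is (a rational representation of) the maximum likelihood estimator of `X`
with respect to `F`: for general `u` its value is the unique critical point of the
log-likelihood `ℓ_{F,u}` along `X`. -/
def IsMLEof (X : Set (Pt ι)) (F : MvPolynomial ι ℂ) (Ψ : RatMap ι ι) : Prop :=
  Generically (fun u : Pt ι => Ψ.isDefinedAt u ∧ {p | IsCriticalPoint X F u p} = {Ψ.eval u})

end

noncomputable section Aux

open MvPolynomial Matrix

variable {ι : Type} [Fintype ι] [DecidableEq ι]

/-- Substitution of the linear forms given by a matrix. -/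
def msub (M : Matrix ι ι ℂ) : MvPolynomial ι ℂ →ₐ[ℂ] MvPolynomial ι ℂ :=
  aeval (fun j => ∑ k, MvPolynomial.C (M j k) * X k)

lemma eval_msub (M : Matrix ι ι ℂ) (f : MvPolynomial ι ℂ) (x : Pt ι) :
    eval x (msub M f) = eval (M.mulVec x) f := by
  induction f using MvPolynomial.induction_on with
  | C a => simp [msub]
  | add p q hp hq => simp [map_add, hp, hq]
  | mul_X p k hp =>
      simp only [_root_.map_mul, hp, eval_X]
      congr 1
      simp [msub, Matrix.mulVec, dotProduct]

lemma pderiv_msub (M : Matrix ι ι ℂ) (f : MvPolynomial ι ℂ) (i : ι) :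
    pderiv i (msub M f) = ∑ j, MvPolynomial.C (M j i) * msub M (pderiv j f) := by
  induction f using MvPolynomial.induction_on with
  | C a => simp [msub]
  | add p q hp hq =>
      simp only [_root_.map_add, hp, hq, mul_add, Finset.sum_add_distrib]
  | mul_X p k hp =>
      have hLk : pderiv i ((msub M) (X k)) = MvPolynomial.C (M k i) := by
        simp [msub, pderiv_C_mul, pderiv_X, Pi.single_apply, mul_ite, mul_one, mul_zero,
          Finset.sum_ite_eq, Finset.sum_ite_eq']
      rw [_root_.map_mul, pderiv_mul, hp, hLk]
      have hpd : ∀ j : ι, pderiv j (p * X k)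
          = pderiv j p * X k + if j = k then p else 0 := by
        intro j
        rw [pderiv_mul, pderiv_X, Pi.single_apply]
        by_cases h : k = j <;> simp [h, eq_comm]
      simp only [hpd, _root_.map_add, _root_.map_mul, mul_add, Finset.sum_add_distrib]
      congr 1
      · rw [Finset.sum_mul]
        exact Finset.sum_congr rfl fun j _ => by ring
      · rw [eq_comm, Finset.sum_eq_single k]
        · simp [mul_comm]
        · intro j _ hj
          simp [hj]
        · intro hk
          exact absurd (Finset.mem_univ k) hk

lemma gradP_msub (M : Matrix ι ι ℂ) (f : MvPolynomial ι ℂ) (p : Pt ι) :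
    gradP (msub M f) p = M.transpose.mulVec (gradP f (M.mulVec p)) := by
  funext i
  simp [gradP, pderiv_msub, eval_msub, Matrix.mulVec, dotProduct,
    Matrix.transpose_apply]

lemma dotL_apply' (u v : Pt ι) : dotL u v = dotP u v := by
  simp [dotL, dotP, LinearMap.sum_apply]

lemma dotP_transpose (M : Matrix ι ι ℂ) (a v : Pt ι) :
    dotP (M.transpose.mulVec a) v = dotP a (M.mulVec v) := by
  unfold dotP Matrix.mulVec dotProduct
  simp only [Matrix.transpose_apply, Finset.sum_mul, Finset.mul_sum]
  rw [Finset.sum_comm]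
  exact Finset.sum_congr rfl fun j _ => Finset.sum_congr rfl fun i _ => by ring

lemma msub_msub (M N : Matrix ι ι ℂ) (f : MvPolynomial ι ℂ) :
    msub M (msub N f) = msub (N * M) f := by
  apply MvPolynomial.funext; intro x
  rw [eval_msub, eval_msub, eval_msub, Matrix.mulVec_mulVec]

lemma msub_one (f : MvPolynomial ι ℂ) : msub (1 : Matrix ι ι ℂ) f = f := by
  apply MvPolynomial.funext; intro x
  rw [eval_msub, Matrix.one_mulVec]

lemma mem_tangent_iff (X : Set (Pt ι)) (p v : Pt ι) :
    v ∈ tangentSpace X p ↔ ∀ f ∈ vanIdeal X, dotP (gradP f p) v = 0 := by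
  simp [tangentSpace, Submodule.mem_iInf, LinearMap.mem_ker, dotL_apply']

end Aux

noncomputable section Main

open MvPolynomial Matrix

variable {ι : Type} [Fintype ι] [DecidableEq ι] {g : Matrix ι ι ℂ}

lemma tangent_image (hgi : g⁻¹ * g = 1) (hig : g * g⁻¹ = 1)
    (C : Set (Pt ι)) (p v : Pt ι) :
    v ∈ tangentSpace ((fun x => g.mulVec x) '' C) (g.mulVec p) ↔
      g⁻¹.mulVec v ∈ tangentSpace C p := by
  rw [mem_tangent_iff, mem_tangent_iff]
  constructor
  · intro H h hh
    have hmem : msub g⁻¹ h ∈ vanIdeal ((fun x => g.mulVec x) '' C) := by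
      rintro y ⟨x, hx, rfl⟩
      rw [eval_msub, Matrix.mulVec_mulVec, hgi, Matrix.one_mulVec]
      exact hh x hx
    have := H _ hmem
    rwa [gradP_msub, Matrix.mulVec_mulVec, hgi, Matrix.one_mulVec, dotP_transpose] at this
  · intro H f hf
    have hmem : msub g f ∈ vanIdeal C := by
      intro x hx
      rw [eval_msub]
      exact hf _ ⟨x, hx, rfl⟩
    have hfe : f = msub g⁻¹ (msub g f) := by rw [msub_msub, hig, msub_one]
    rw [hfe, gradP_msub, Matrix.mulVec_mulVec, hgi, Matrix.one_mulVec, dotP_transpose]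
    exact H _ hmem

lemma finrank_tangent_image (hgi : g⁻¹ * g = 1) (hig : g * g⁻¹ = 1)
    (C : Set (Pt ι)) (p : Pt ι) :
    Module.finrank ℂ (tangentSpace ((fun x => g.mulVec x) '' C) (g.mulVec p))
      = Module.finrank ℂ (tangentSpace C p) := by
  let e : (Pt ι) ≃ₗ[ℂ] (Pt ι) := Matrix.toLin'OfInv hgi hig
  have hset : tangentSpace ((fun x => g.mulVec x) '' C) (g.mulVec p)
      = (tangentSpace C p).map (e : Pt ι →ₗ[ℂ] Pt ι) := by
    ext v
    rw [Submodule.mem_map_equiv, tangent_image hgi hig]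
    have : e.symm v = g⁻¹.mulVec v := rfl
    rw [this]
  rw [hset, LinearEquiv.finrank_map_eq]

lemma smooth_image (hgi : g⁻¹ * g = 1) (hig : g * g⁻¹ = 1)
    (C : Set (Pt ι)) (p : Pt ι) :
    p ∈ smoothLocus C ↔ g.mulVec p ∈ smoothLocus ((fun x => g.mulVec x) '' C) := by
  have hinj : Function.Injective (fun x : Pt ι => g.mulVec x) := by
    intro x y hxy
    have := congrArg (fun z => g⁻¹.mulVec z) hxy
    simpa [Matrix.mulVec_mulVec, hgi, Matrix.one_mulVec] using this
  constructor
  · rintro ⟨hpC, hmin⟩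
    refine ⟨⟨p, hpC, rfl⟩, ?_⟩
    rintro q' ⟨q, hq, rfl⟩
    rw [finrank_tangent_image hgi hig, finrank_tangent_image hgi hig]
    exact hmin q hq
  · rintro ⟨hpC, hmin⟩
    obtain ⟨q, hq, hq'⟩ := hpC
    have hqp : q = p := hinj hq'
    subst hqp
    refine ⟨hq, fun r hr => ?_⟩
    have := hmin (g.mulVec r) ⟨r, hr, rfl⟩
    rwa [finrank_tangent_image hgi hig, finrank_tangent_image hgi hig] at this

lemma crit_iff (hgi : g⁻¹ * g = 1) (hig : g * g⁻¹ = 1)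
    (C : Set (Pt ι)) (F : MvPolynomial ι ℂ)
    (hinv : ∀ x : Pt ι, MvPolynomial.eval (g.mulVec x) F = MvPolynomial.eval x F)
    (hFg : msub g F = F) (u p : Pt ι) :
    IsCriticalPoint C F (g.transpose.mulVec u) p ↔
      IsCriticalPoint ((fun x => g.mulVec x) '' C) F u (g.mulVec p) := by
  have hgrad : gradP F p = g.transpose.mulVec (gradP F (g.mulVec p)) := by
    conv_lhs => rw [← hFg]
    rw [gradP_msub]
  constructor
  · rintro ⟨hsm, hne, hcrit⟩
    refine ⟨(smooth_image hgi hig C p).mp hsm, by rwa [hinv p], ?_⟩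
    intro v hv
    have hw : g⁻¹.mulVec v ∈ tangentSpace C p := (tangent_image hgi hig C p v).mp hv
    have hvg : g.mulVec (g⁻¹.mulVec v) = v := by
      rw [Matrix.mulVec_mulVec, hig, Matrix.one_mulVec]
    have hc := hcrit _ hw
    rw [hgrad, dotP_transpose, hvg, dotP_transpose, hvg] at hc
    rw [hinv p]
    exact hc
  · rintro ⟨hsm, hne, hcrit⟩
    refine ⟨(smooth_image hgi hig C p).mpr hsm, by rw [← hinv p]; exact hne, ?_⟩
    intro w hw
    have hv : g.mulVec w ∈ tangentSpace ((fun x => g.mulVec x) '' C) (g.mulVec p) := by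
      rw [tangent_image hgi hig, Matrix.mulVec_mulVec, hgi, Matrix.one_mulVec]
      exact hw
    have hc := hcrit _ hv
    rw [hgrad, dotP_transpose, dotP_transpose, ← hinv p]
    exact hc

lemma critSet_image (hgi : g⁻¹ * g = 1) (hig : g * g⁻¹ = 1)
    (C : Set (Pt ι)) (F : MvPolynomial ι ℂ)
    (hinv : ∀ x : Pt ι, MvPolynomial.eval (g.mulVec x) F = MvPolynomial.eval x F)
    (hFg : msub g F = F) (u : Pt ι) :
    {p | IsCriticalPoint ((fun x => g.mulVec x) '' C) F u p}
      = (fun x => g.mulVec x) '' {p | IsCriticalPoint C F (g.transpose.mulVec u) p} := by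
  ext p'
  constructor
  · intro hp'
    obtain ⟨q, hq, rfl⟩ := hp'.1.1
    exact ⟨q, (crit_iff hgi hig C F hinv hFg u q).mpr hp', rfl⟩
  · rintro ⟨q, hq, rfl⟩
    exact (crit_iff hgi hig C F hinv hFg u q).mp hq

end Main

/-- **Proposition (SL-equivariance of ML degree one and its PDE solution).**
Let `F` be a homogeneous polynomial on `𝓛` invariant under `g ∈ SL(𝓛)`, and let
`X ⊆ ℙ(𝓛)` (with affine cone `C`) satisfy `MLD_F(X) = 1`.  Then
`MLD_F(g·X) = 1`, and the associated solutions of the homaloidal PDE satisfy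
`Φ_{g·X,𝓛,F} = Φ_{X,𝓛,F} ∘ gᵀ`; i.e. for general `u`, the value of `F` at the
maximum likelihood estimate of `g·X` at `u` equals the value of `F` at the
maximum likelihood estimate of `X` at `gᵀ(u)`. -/
theorem sl_invariance_of_mld_one {ι : Type} [Fintype ι] [DecidableEq ι]
    (C : Set (Pt ι)) (F : MvPolynomial ι ℂ) (dF : ℕ)
    (hvar : IsAffineVariety C) (hcone : IsCone C) (hF : F.IsHomogeneous dF)
    (g : Matrix ι ι ℂ) (hdet : g.det = 1)
    (hinv : ∀ x : Pt ι, MvPolynomial.eval (g.mulVec x) F = MvPolynomial.eval x F)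
    (hmld : MLDegreeIs C F 1) :
    MLDegreeIs ((fun x => g.mulVec x) '' C) F 1 ∧
    Generically (fun u : Pt ι =>
      ∀ p p' : Pt ι,
        IsCriticalPoint C F (g.transpose.mulVec u) p →
        IsCriticalPoint ((fun x => g.mulVec x) '' C) F u p' →
        MvPolynomial.eval p' F = MvPolynomial.eval p F) := by
  have hgu : IsUnit g.det := by rw [hdet]; exact isUnit_one
  have hgi : g⁻¹ * g = 1 := Matrix.nonsing_inv_mul g hgu
  have hig : g * g⁻¹ = 1 := Matrix.mul_nonsing_inv g hgu
  have hFg : msub g F = F := MvPolynomial.funext fun x => by rw [eval_msub, hinv]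
  have hinj : Function.Injective (fun x : Pt ι => g.mulVec x) := by
    intro x y hxy
    have := congrArg (fun z => g⁻¹.mulVec z) hxy
    simpa [Matrix.mulVec_mulVec, hgi, Matrix.one_mulVec] using this
  obtain ⟨h, hh0, hhP⟩ := hmld
  have h1t : g.transpose * g⁻¹.transpose = 1 := by
    rw [← Matrix.transpose_mul, hgi, Matrix.transpose_one]
  have hh'0 : msub g.transpose h ≠ 0 := by
    intro hz
    apply hh0
    refine MvPolynomial.funext fun w => ?_
    have h2 : MvPolynomial.eval (g⁻¹.transpose.mulVec w) (msub g.transpose h) = 0 := by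
      rw [hz, map_zero]
    rw [eval_msub, Matrix.mulVec_mulVec, h1t, Matrix.one_mulVec] at h2
    rw [h2, map_zero]
  constructor
  · refine ⟨msub g.transpose h, hh'0, fun u hu => ?_⟩
    have hu' : MvPolynomial.eval (g.transpose.mulVec u) h ≠ 0 := by
      rwa [eval_msub] at hu
    have hcard := hhP _ hu'
    show {p | IsCriticalPoint ((fun x => g.mulVec x) '' C) F u p}.ncard = 1
    rw [critSet_image hgi hig C F hinv hFg u, Set.ncard_image_of_injective _ hinj]
    exact hcard
  · refine ⟨msub g.transpose h, hh'0, fun u hu p p' hp hp' => ?_⟩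
    have hu' : MvPolynomial.eval (g.transpose.mulVec u) h ≠ 0 := by
      rwa [eval_msub] at hu
    have hcard := hhP _ hu'
    obtain ⟨a, ha⟩ := Set.ncard_eq_one.mp hcard
    have hpa : p = a := by
      have hm : p ∈ {p | IsCriticalPoint C F (g.transpose.mulVec u) p} := hp
      rw [ha] at hm
      exact hm
    obtain ⟨q, hq, rfl⟩ := hp'.1.1
    have hqc : IsCriticalPoint C F (g.transpose.mulVec u) q :=
      (crit_iff hgi hig C F hinv hFg u q).mpr hp'
    have hqa : q = a := by
      have hm : q ∈ {p | IsCriticalPoint C F (g.transpose.mulVec u) p} := hqc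
      rw [ha] at hm
      exact hm
    rw [hinv q, hqa, hpa]
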